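/- arXiv:2501.13519 — 4 statements merged into one kernel-verified Lean document; each statement's English description precedes it below -/
import Mathlib

section
/- Let a, b ∈ ℤ be such that f(x) = x⁸ + a x⁶ + b x⁴ + a x² + 1 is irreducible over ℚ, let α be a root of f, and K = ℚ(α). Then δ := α² + α^{−2} satisfies δ² + aδ + (b − 2) = 0; the field M := ℚ(δ) is a quadratic extension of ℚ, namely M = ℚ(√(a² − 4b + 8)); and the minimal polynomial of α over M is h(x) = x⁴ − δ x² + 1, so that [K : M] = 4. -/
open NumberField Polynomial IntermediateField

set_option maxHeartbeats 1000000
set_option synthInstance.maxHeartbeats 200000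

/-- Let `f(x) = x⁸ + a x⁶ + b x⁴ + a x² + 1` be irreducible over `ℚ`, `α` a
root, `K = ℚ(α)`. Then `δ = α² + α⁻²` satisfies `δ² + aδ + (b−2) = 0`; `M = ℚ(δ)` is a
quadratic extension of `ℚ`, namely `M = ℚ(√(a²−4b+8))`; and the minimal polynomial of `α`
over `M` is `x⁴ − δx² + 1`, so `[K : M] = 4`. -/
theorem stmt6 (a b : ℤ) (K : Type*) [Field K] [NumberField K]
    (hirr : Irreducible (X ^ 8 + C (a : ℚ) * X ^ 6 + C (b : ℚ) * X ^ 4 + C (a : ℚ) * X ^ 2 + 1 :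
      Polynomial ℚ))
    (α : K)
    (hroot : Polynomial.aeval α (X ^ 8 + C a * X ^ 6 + C b * X ^ 4 + C a * X ^ 2 + 1 :
      Polynomial ℤ) = 0)
    (hK : IntermediateField.adjoin ℚ {α} = ⊤)
    (δ : K) (hδ : δ = α ^ 2 + (α ^ 2)⁻¹) :
    δ ^ 2 + (a : K) * δ + ((b : K) - 2) = 0 ∧
    Module.finrank ℚ (IntermediateField.adjoin ℚ {δ} : IntermediateField ℚ K) = 2 ∧
    (∃ s : K, s ^ 2 = ((a ^ 2 - 4 * b + 8 : ℤ) : K) ∧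
      IntermediateField.adjoin ℚ {δ} = IntermediateField.adjoin ℚ {s}) ∧
    minpoly (IntermediateField.adjoin ℚ {δ} : IntermediateField ℚ K) α =
      X ^ 4 - C (⟨δ, IntermediateField.mem_adjoin_simple_self ℚ δ⟩ :
        IntermediateField.adjoin ℚ {δ}) * X ^ 2 + 1 ∧
    Module.finrank (IntermediateField.adjoin ℚ {δ} : IntermediateField ℚ K) K = 4 := by
  have hα0 : α ≠ 0 := by
    intro h
    rw [h] at hroot
    simp at hroot
  have hα2 : α ^ 2 ≠ 0 := pow_ne_zero 2 hα0
  have hf : α ^ 8 + (a : K) * α ^ 6 + (b : K) * α ^ 4 + (a : K) * α ^ 2 + 1 = 0 := by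
    simpa using hroot
  have hquad : δ ^ 2 + (a : K) * δ + ((b : K) - 2) = 0 := by
    rw [hδ]
    field_simp
    linear_combination hf
  have hα4 : α ^ 4 - δ * α ^ 2 + 1 = 0 := by
    rw [hδ]
    field_simp
    ring
  -- minimal polynomial of α over ℚ
  have hmono : (X ^ 8 + C (a : ℚ) * X ^ 6 + C (b : ℚ) * X ^ 4 + C (a : ℚ) * X ^ 2 + 1 :
      Polynomial ℚ).Monic := by monicity!
  have haev : Polynomial.aeval α (X ^ 8 + C (a : ℚ) * X ^ 6 + C (b : ℚ) * X ^ 4 +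
      C (a : ℚ) * X ^ 2 + 1 : Polynomial ℚ) = 0 := by
    simp
    push_cast
    linear_combination hf
  have hmin : minpoly ℚ α = X ^ 8 + C (a : ℚ) * X ^ 6 + C (b : ℚ) * X ^ 4 +
      C (a : ℚ) * X ^ 2 + 1 :=
    (minpoly.eq_of_irreducible_of_monic hirr haev hmono).symm
  have hdeg8 : (minpoly ℚ α).natDegree = 8 := by
    rw [hmin]
    compute_degree!
  have hfr8 : Module.finrank ℚ K = 8 := by
    rw [← hdeg8, ← IntermediateField.adjoin.finrank (IsIntegral.of_finite ℚ α), hK]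
    exact IntermediateField.finrank_top'.symm
  set M : IntermediateField ℚ K := IntermediateField.adjoin ℚ {δ} with hM
  have hδM : δ ∈ M := IntermediateField.mem_adjoin_simple_self ℚ δ
  haveI : FiniteDimensional M K := FiniteDimensional.right ℚ M K
  have αint : IsIntegral M α := IsIntegral.of_finite M α
  set δM : M := ⟨δ, hδM⟩ with hδMdef
  set hp : Polynomial M := X ^ 4 - C δM * X ^ 2 + 1 with hhp
  have hhmonic : hp.Monic := by unfold hp; monicity!
  have hhdeg : hp.natDegree = 4 := by unfold hp; compute_degree!
  have haevh : Polynomial.aeval α hp = 0 := by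
    have : (algebraMap M K) δM = δ := rfl
    simp [hhp, this]
    linear_combination hα4
  have hdvd : minpoly M α ∣ hp := minpoly.dvd M α haevh
  have hdegle : (minpoly M α).natDegree ≤ 4 := by
    rw [← hhdeg]
    exact natDegree_le_of_dvd hdvd hhmonic.ne_zero
  -- M⟮α⟯ = ⊤
  have h1 : (IntermediateField.adjoin M {α}).restrictScalars ℚ = ⊤ := by
    erw [IntermediateField.restrictScalars_adjoin (K := M) (S := {α})]; rw [eq_top_iff, ← hK]
    exact IntermediateField.adjoin.mono _ _ _ Set.subset_union_right
  have htop : IntermediateField.adjoin M {α} = ⊤ := by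
    apply IntermediateField.restrictScalars_injective ℚ
    rw [h1]
    rfl
  have hfrMK : Module.finrank M K = (minpoly M α).natDegree := by
    rw [← IntermediateField.adjoin.finrank αint, htop]
    exact IntermediateField.finrank_top'.symm
  -- degree of M over ℚ
  have hδint : IsIntegral ℚ δ := IsIntegral.of_finite ℚ δ
  have gmonic : (X ^ 2 + C (a : ℚ) * X + C ((b : ℚ) - 2)).Monic := by monicity!
  have gev : Polynomial.aeval δ (X ^ 2 + C (a : ℚ) * X + C ((b : ℚ) - 2)) = 0 := by
    simp
    push_cast
    linear_combination hquad
  have hfrM : Module.finrank ℚ M = (minpoly ℚ δ).natDegree :=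
    IntermediateField.adjoin.finrank hδint
  have hle2 : (minpoly ℚ δ).natDegree ≤ 2 := by
    refine le_trans (natDegree_le_of_dvd (minpoly.dvd ℚ δ gev) gmonic.ne_zero) ?_
    compute_degree!
  have htower : Module.finrank ℚ M * Module.finrank M K = 8 := by
    rw [Module.finrank_mul_finrank, hfr8]
  have e1 : Module.finrank ℚ M ≤ 2 := by rw [hfrM]; exact hle2
  have e2 : Module.finrank M K ≤ 4 := by rw [hfrMK]; exact hdegle
  have hge : 8 ≤ Module.finrank ℚ M * 4 := by
    calc 8 = Module.finrank ℚ M * Module.finrank M K := htower.symm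
    _ ≤ Module.finrank ℚ M * 4 := Nat.mul_le_mul_left _ e2
  have hm2 : Module.finrank ℚ M = 2 := by omega
  rw [hm2] at htower
  have hk4 : Module.finrank M K = 4 := by omega
  have hMfr : Module.finrank ℚ M = 2 ∧ Module.finrank M K = 4 := ⟨hm2, hk4⟩
  have hminα : minpoly M α = hp := by
    refine eq_of_dvd_of_natDegree_le_of_leadingCoeff hdvd ?_ ?_
    · rw [hhdeg, ← hfrMK, hMfr.2]
    · rw [(minpoly.monic αint).leadingCoeff, hhmonic.leadingCoeff]
  refine ⟨hquad, hMfr.1, ⟨2 * δ + (a : K), ?_, ?_⟩, hminα, by rw [hfrMK, ← hhdeg, hminα]⟩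
  · push_cast
    linear_combination 4 * hquad
  · apply le_antisymm
    · rw [IntermediateField.adjoin_simple_le_iff]
      have h2m : (2 : K) ∈ IntermediateField.adjoin ℚ {2 * δ + (a : K)} := by
        simpa using (IntermediateField.adjoin ℚ {2 * δ + (a : K)}).algebraMap_mem (2 : ℚ)
      have ham : ((a : K)) ∈ IntermediateField.adjoin ℚ {2 * δ + (a : K)} :=
        intCast_mem _ a
      have hsm := IntermediateField.mem_adjoin_simple_self ℚ (2 * δ + (a : K))
      have hd := div_mem (sub_mem hsm ham) h2m
      rwa [show (2 * δ + (a : K) - (a : K)) / 2 = δ by ring] at hd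
    · rw [IntermediateField.adjoin_simple_le_iff]
      have h2m : (2 : K) ∈ M := by simpa using M.algebraMap_mem (2 : ℚ)
      exact add_mem (mul_mem h2m hδM) (intCast_mem _ a)
end

section
/- Let δ ∈ ℂ and let α^{(1)}, α^{(2)}, α^{(3)}, α^{(4)} ∈ ℂ be the roots (with multiplicity) of x⁴ − δx² + 1. Let P, Q ∈ ℂ with |∏_{j=1}^{4} (P − α^{(j)}Q)| = 1 and |Q| ≥ 10. Let i₀ be an index at which |P − α^{(j)}Q| attains its minimum over j ∈ {1,2,3,4}, and assume |α^{(j)} − α^{(i₀)}| > 0.1 for every j ≠ i₀. Then |P − α^{(i₀)}Q| ≤ |Q|^{−3} / ∏_{j ≠ i₀} (|α^{(j)} − α^{(i₀)}| − 0.1). -/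
open Polynomial

/-- Let `α⁽¹⁾,…,α⁽⁴⁾` be the roots (with multiplicity) of `x⁴ − δx² + 1`,
and let `P, Q ∈ ℂ` with `|∏ⱼ (P − α⁽ʲ⁾Q)| = 1` and `|Q| ≥ 10`. If `i₀` minimizes
`|P − α⁽ʲ⁾Q|` and `|α⁽ʲ⁾ − α⁽ⁱ⁰⁾| > 0.1` for `j ≠ i₀`, then
`|P − α⁽ⁱ⁰⁾Q| ≤ |Q|⁻³ / ∏_{j ≠ i₀} (|α⁽ʲ⁾ − α⁽ⁱ⁰⁾| − 0.1)`. -/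
theorem stmt13 (δ : ℂ) (α : Fin 4 → ℂ)
    (hroots : (X ^ 4 - C δ * X ^ 2 + 1 : Polynomial ℂ) = ∏ j : Fin 4, (X - C (α j)))
    (P Q : ℂ)
    (hPQ : ‖∏ j : Fin 4, (P - α j * Q)‖ = 1)
    (hQ : 10 ≤ ‖Q‖)
    (i₀ : Fin 4)
    (hmin : ∀ j : Fin 4, ‖P - α i₀ * Q‖ ≤ ‖P - α j * Q‖)
    (hsep : ∀ j : Fin 4, j ≠ i₀ → (0.1 : ℝ) < ‖α j - α i₀‖) :
    ‖P - α i₀ * Q‖ ≤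
      (‖Q‖) ^ (-3 : ℤ) /
        ∏ j ∈ Finset.univ.filter (fun j : Fin 4 => j ≠ i₀),
          (‖α j - α i₀‖ - 0.1) := by
  set m := ‖P - α i₀ * Q‖ with hm
  have hm0 : 0 ≤ m := norm_nonneg _
  have hprod : ∏ j : Fin 4, ‖P - α j * Q‖ = 1 := by
    rw [← norm_prod]; exact hPQ
  have hQ0 : (0:ℝ) < ‖Q‖ := by linarith
  -- m ≤ 1
  have hm4 : m ^ 4 ≤ 1 := by
    calc m ^ 4 = ∏ _j : Fin 4, m := by
          rw [Finset.prod_const]; simp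
      _ ≤ ∏ j : Fin 4, ‖P - α j * Q‖ :=
          Finset.prod_le_prod (fun _ _ => hm0) (fun j _ => hmin j)
      _ = 1 := hprod
  have hm1 : m ≤ 1 := by
    nlinarith [sq_nonneg m, sq_nonneg (m - 1), sq_nonneg (m + 1), sq_nonneg (m^2 - 1)]
  -- lower bound on other factors
  have hfac : ∀ j : Fin 4, j ≠ i₀ →
      (‖α j - α i₀‖ - 0.1) * ‖Q‖ ≤ ‖P - α j * Q‖ := by
    intro j hj
    have key : ‖(α j - α i₀) * Q‖ - m ≤ ‖P - α j * Q‖ := by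
      have : P - α j * Q = (P - α i₀ * Q) - (α j - α i₀) * Q := by ring
      rw [this]
      have := norm_sub_norm_le ((α j - α i₀) * Q) (P - α i₀ * Q)
      have h2 : ‖(α j - α i₀) * Q - (P - α i₀ * Q)‖
          = ‖(P - α i₀ * Q) - (α j - α i₀) * Q‖ :=
        norm_sub_rev _ _
      calc ‖(α j - α i₀) * Q‖ - m
          ≤ ‖(α j - α i₀) * Q - (P - α i₀ * Q)‖ := this
        _ = _ := h2
    rw [norm_mul] at key
    have hm01 : m ≤ 0.1 * ‖Q‖ := by nlinarith
    nlinarith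
  -- product decomposition
  have herase : (Finset.univ.filter (fun j : Fin 4 => j ≠ i₀)) = Finset.univ.erase i₀ :=
    Finset.filter_ne' _ _
  have hcard : (Finset.univ.erase i₀ : Finset (Fin 4)).card = 3 := by
    rw [Finset.card_erase_of_mem (Finset.mem_univ _)]; simp
  set D := ∏ j ∈ Finset.univ.filter (fun j : Fin 4 => j ≠ i₀),
      (‖α j - α i₀‖ - 0.1) with hD
  have hD0 : 0 < D := by
    apply Finset.prod_pos
    intro j hj
    rw [Finset.mem_filter] at hj
    have := hsep j hj.2
    linarith
  have hsplit : m * ∏ j ∈ Finset.univ.erase i₀, ‖P - α j * Q‖ = 1 := by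
    have h := Finset.mul_prod_erase Finset.univ
      (fun j : Fin 4 => ‖P - α j * Q‖) (Finset.mem_univ i₀)
    rw [hprod] at h
    exact h
  have hlow : D * ‖Q‖ ^ 3 ≤ ∏ j ∈ Finset.univ.erase i₀, ‖P - α j * Q‖ := by
    have : ∏ j ∈ Finset.univ.erase i₀, ((‖α j - α i₀‖ - 0.1) * ‖Q‖)
        ≤ ∏ j ∈ Finset.univ.erase i₀, ‖P - α j * Q‖ := by
      apply Finset.prod_le_prod
      · intro j hj
        rw [Finset.mem_erase] at hj
        have h1 := hsep j hj.1
        nlinarith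
      · intro j hj
        rw [Finset.mem_erase] at hj
        exact hfac j hj.1
    calc D * ‖Q‖ ^ 3
        = ∏ j ∈ Finset.univ.erase i₀, ((‖α j - α i₀‖ - 0.1) * ‖Q‖) := by
          rw [Finset.prod_mul_distrib, Finset.prod_const, hcard, hD, herase]
      _ ≤ _ := this
  have hkey : m * (D * ‖Q‖ ^ 3) ≤ 1 := by
    calc m * (D * ‖Q‖ ^ 3)
        ≤ m * ∏ j ∈ Finset.univ.erase i₀, ‖P - α j * Q‖ := by
          apply mul_le_mul_of_nonneg_left hlow hm0
      _ = 1 := hsplit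
  have hpos : 0 < ‖Q‖ ^ 3 * D := by positivity
  have hkey2 : m * (‖Q‖ ^ 3 * D) ≤ 1 := by nlinarith [hkey]
  have hgoal : m ≤ (‖Q‖ ^ 3)⁻¹ / D := by
    have h1 : m ≤ 1 / (‖Q‖ ^ 3 * D) := by
      rw [le_div_iff₀ hpos]
      exact hkey2
    calc m ≤ 1 / (‖Q‖ ^ 3 * D) := h1
      _ = (‖Q‖ ^ 3)⁻¹ / D := by
          rw [one_div, mul_inv, div_eq_mul_inv]
  calc m ≤ (‖Q‖ ^ 3)⁻¹ / D := hgoal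
    _ = (‖Q‖) ^ (-3 : ℤ) / D := by
        rw [zpow_neg, zpow_ofNat]
end

section
/- Let a, b ∈ ℤ with m := a² − 4b + 8 < 0. Set δ = (−a + i√|m|)/2 and δ̄ = (−a − i√|m|)/2 in ℂ. Let α₁, α₂, α₃, α₄ ∈ ℂ be the roots (with multiplicity) of x⁴ − δx² + 1 and β₁, β₂, β₃, β₄ ∈ ℂ the roots of x⁴ − δ̄x² + 1. Then ∏_{j=1}^{4} ∏_{k=1}^{4} | (α_j³ − δα_j) − (β_k³ − δ̄β_k) | = m². -/
open Polynomial

lemma stmt14_aux (δ0 : ℂ) (f : Fin 4 → ℂ)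
    (hf : (X ^ 4 - C δ0 * X ^ 2 + 1 : Polynomial ℂ) = ∏ j : Fin 4, (X - C (f j))) :
    (∀ j, f j ^ 4 - δ0 * f j ^ 2 + 1 = 0) ∧ (∏ j, f j = 1) := by
  constructor
  · intro j
    have h := congrArg (eval (f j)) hf
    simp [eval_prod] at h
    rw [h]
    exact Finset.prod_eq_zero (Finset.mem_univ j) (by ring)
  · have h := congrArg (eval 0) hf
    simp [eval_prod] at h
    rw [Fin.prod_univ_four] at h ⊢
    linear_combination -h

/-- Let `m = a² − 4b + 8 < 0`, `δ = (−a + i√|m|)/2`, `δ̄ = (−a − i√|m|)/2`.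
If `α₁,…,α₄` are the roots of `x⁴ − δx² + 1` and `β₁,…,β₄` the roots of `x⁴ − δ̄x² + 1`,
then `∏ⱼ ∏ₖ |(αⱼ³ − δαⱼ) − (βₖ³ − δ̄βₖ)| = m²`. -/
theorem stmt14 (a b : ℤ) (hm : a ^ 2 - 4 * b + 8 < 0)
    (δ δ' : ℂ)
    (hδ : δ = (-(a : ℂ) + Complex.I * (Real.sqrt |(a ^ 2 - 4 * b + 8 : ℤ)| : ℝ)) / 2)
    (hδ' : δ' = (-(a : ℂ) - Complex.I * (Real.sqrt |(a ^ 2 - 4 * b + 8 : ℤ)| : ℝ)) / 2)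
    (α β : Fin 4 → ℂ)
    (hα : (X ^ 4 - C δ * X ^ 2 + 1 : Polynomial ℂ) = ∏ j : Fin 4, (X - C (α j)))
    (hβ : (X ^ 4 - C δ' * X ^ 2 + 1 : Polynomial ℂ) = ∏ k : Fin 4, (X - C (β k))) :
    (∏ j : Fin 4, ∏ k : Fin 4,
        ‖(α j ^ 3 - δ * α j) - (β k ^ 3 - δ' * β k)‖) =
      (((a ^ 2 - 4 * b + 8 : ℤ) ^ 2 : ℤ) : ℝ) := by
  obtain ⟨hrα, hpα⟩ := stmt14_aux δ α hα
  obtain ⟨hrβ, hpβ⟩ := stmt14_aux δ' β hβ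
  have hαne : ∀ j, α j ≠ 0 := by
    intro j h
    have := hrα j
    rw [h] at this
    norm_num at this
  have hβne : ∀ k, β k ≠ 0 := by
    intro k h
    have := hrβ k
    rw [h] at this
    norm_num at this
  -- each factor equals (α j - β k) * (α j)⁻¹ * (β k)⁻¹
  have hterm : ∀ j k, (α j ^ 3 - δ * α j) - (β k ^ 3 - δ' * β k)
      = (α j - β k) * (α j)⁻¹ * (β k)⁻¹ := by
    intro j k
    have h1 := hαne j
    have h2 := hβne k
    field_simp
    linear_combination (β k) * hrα j - (α j) * hrβ k
  -- inner product over k of (α j - β k)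
  have hinner : ∀ j, (∏ k, (α j - β k)) = (δ - δ') * α j ^ 2 := by
    intro j
    have h := congrArg (eval (α j)) hβ
    simp [eval_prod] at h
    rw [← h]
    linear_combination hrα j
  have key : (∏ j, ∏ k, ((α j ^ 3 - δ * α j) - (β k ^ 3 - δ' * β k))) = (δ - δ') ^ 4 := by
    have h1 : ∀ j, (∏ k, ((α j ^ 3 - δ * α j) - (β k ^ 3 - δ' * β k)))
        = (δ - δ') * ((α j) ^ 2)⁻¹ := by
      intro j
      calc (∏ k, ((α j ^ 3 - δ * α j) - (β k ^ 3 - δ' * β k)))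
          = ∏ k, (α j - β k) * (α j)⁻¹ * (β k)⁻¹ := by
            exact Finset.prod_congr rfl fun k _ => hterm j k
        _ = (∏ k, (α j - β k)) * (∏ _k : Fin 4, (α j)⁻¹) * (∏ k, (β k)⁻¹) := by
            rw [← Finset.prod_mul_distrib, ← Finset.prod_mul_distrib]
        _ = ((δ - δ') * α j ^ 2) * ((α j)⁻¹) ^ 4 * (∏ k, β k)⁻¹ := by
            rw [hinner j, Finset.prod_const, Finset.prod_inv_distrib]
            norm_num
        _ = (δ - δ') * ((α j) ^ 2)⁻¹ := by
            rw [hpβ]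
            field_simp [hαne j]
    calc (∏ j, ∏ k, ((α j ^ 3 - δ * α j) - (β k ^ 3 - δ' * β k)))
        = ∏ j, (δ - δ') * ((α j) ^ 2)⁻¹ := Finset.prod_congr rfl fun j _ => h1 j
      _ = (δ - δ') ^ 4 * ((∏ j, α j) ^ 2)⁻¹ := by
          rw [Finset.prod_mul_distrib, Finset.prod_const]
          rw [← Finset.prod_pow, Finset.prod_inv_distrib]
          norm_num
      _ = (δ - δ') ^ 4 := by rw [hpα]; norm_num
  have habs : (∏ j, ∏ k, ‖(α j ^ 3 - δ * α j) - (β k ^ 3 - δ' * β k)‖)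
      = ‖(δ - δ') ^ 4‖ := by
    rw [← key]
    rw [norm_prod]
    exact Finset.prod_congr rfl fun j _ => (norm_prod _ _).symm
  rw [habs]
  set s : ℝ := Real.sqrt |(a ^ 2 - 4 * b + 8 : ℤ)| with hs
  have hdd : δ - δ' = Complex.I * (s : ℂ) := by
    rw [hδ, hδ']; ring
  have hs4 : s ^ 4 = ((|(a ^ 2 - 4 * b + 8 : ℤ)| : ℤ) : ℝ) ^ 2 := by
    have hnn : (0:ℝ) ≤ ((|(a ^ 2 - 4 * b + 8 : ℤ)| : ℤ) : ℝ) := by positivity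
    have : s ^ 2 = ((|(a ^ 2 - 4 * b + 8 : ℤ)| : ℤ) : ℝ) := by
      rw [hs]; push_cast; rw [Real.sq_sqrt]; positivity
    calc s ^ 4 = (s ^ 2) ^ 2 := by ring
      _ = _ := by rw [this]
  rw [hdd]
  have : (Complex.I * (s : ℂ)) ^ 4 = ((s ^ 4 : ℝ) : ℂ) := by
    push_cast
    rw [show (Complex.I * (s:ℂ)) ^ 4 = Complex.I ^ 4 * (s:ℂ) ^ 4 by ring, Complex.I_pow_four,
      one_mul]
  rw [this, Complex.norm_real, Real.norm_eq_abs, abs_of_nonneg (by positivity), hs4]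
  push_cast
  rw [sq_abs]
end

section
/- Let a, b ∈ ℤ be such that f(x) = x⁸ + a x⁶ + b x⁴ + a x² + 1 is irreducible over ℚ, let α be a root, K = ℚ(α), and assume ℤ[α] = ℤ_K (i.e., (1, α, α², …, α⁷) is an integral basis of K). Let M = ℚ(α² + α^{−2}) be the quadratic subfield of K with ring of integers ℤ_M. Then ℤ_K is a free ℤ_M-module with basis (1, α, α², α³); in particular every γ ∈ ℤ_K can be written uniquely as γ = C + Xα + Yα² + Zα³ with C, X, Y, Z ∈ ℤ_M. -/
set_option maxHeartbeats 400000


open NumberField Polynomial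

/-- Let `f(x) = x⁸ + ax⁶ + bx⁴ + ax² + 1` be irreducible over `ℚ`, `α` a
root, `K = ℚ(α)` with `ℤ[α] = 𝓞 K`. Let `M = ℚ(α² + α⁻²)` be the quadratic subfield of
`K`. Then `𝓞 K` is a free `𝓞 M`-module with basis `(1, α, α², α³)`; in particular every
`γ ∈ 𝓞 K` is uniquely `γ = C + Xα + Yα² + Zα³` with `C, X, Y, Z ∈ 𝓞 M`. -/
theorem stmt16 (a b : ℤ) (K : Type*) [Field K] [NumberField K]
    (hirr : Irreducible (X ^ 8 + C (a : ℚ) * X ^ 6 + C (b : ℚ) * X ^ 4 + C (a : ℚ) * X ^ 2 + 1 :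
      Polynomial ℚ))
    (α : 𝓞 K)
    (hroot : Polynomial.aeval α (X ^ 8 + C a * X ^ 6 + C b * X ^ 4 + C a * X ^ 2 + 1 :
      Polynomial ℤ) = 0)
    (hK : IntermediateField.adjoin ℚ {(α : K)} = ⊤)
    (hmono : Algebra.adjoin ℤ {α} = ⊤)
    (δ : K) (hδ : δ = (α : K) ^ 2 + ((α : K) ^ 2)⁻¹)
    (M : IntermediateField ℚ K) (hM : M = IntermediateField.adjoin ℚ {δ}) :
    (∃ bas : Module.Basis (Fin 4) (𝓞 M) (𝓞 K), ∀ i : Fin 4, bas i = α ^ (i : ℕ)) ∧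
    ∀ γ : 𝓞 K, ∃! q : (𝓞 M) × (𝓞 M) × (𝓞 M) × (𝓞 M),
      γ = algebraMap (𝓞 M) (𝓞 K) q.1 + algebraMap (𝓞 M) (𝓞 K) q.2.1 * α +
        algebraMap (𝓞 M) (𝓞 K) q.2.2.1 * α ^ 2 +
        algebraMap (𝓞 M) (𝓞 K) q.2.2.2 * α ^ 3 := by
  classical
  -- the root equation inside 𝓞 K
  have hO8 : α ^ 8 + (a : 𝓞 K) * α ^ 6 + (b : 𝓞 K) * α ^ 4 + (a : 𝓞 K) * α ^ 2 + 1 = 0 := by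
    simpa using hroot
  -- and inside K
  have hA8 : (α : K) ^ 8 + (a : K) * (α : K) ^ 6 + (b : K) * (α : K) ^ 4
      + (a : K) * (α : K) ^ 2 + 1 = 0 := by
    have h := congrArg (algebraMap (𝓞 K) K) hO8
    simp only [map_add, map_mul, map_pow, map_one, map_zero, map_intCast] at h
    exact h
  have hA0 : (α : K) ≠ 0 := by
    intro h
    rw [h] at hA8
    norm_num at hA8
  -- E = α⁻² as an element of 𝓞 K
  set E : 𝓞 K := -(α ^ 6 + (a : 𝓞 K) * α ^ 4 + (b : 𝓞 K) * α ^ 2 + (a : 𝓞 K)) with hE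
  have hEK : (α : K) ^ 2 * (E : K) = 1 := by
    have hEc : (E : K) = -((α : K) ^ 6 + (a : K) * (α : K) ^ 4 + (b : K) * (α : K) ^ 2 + (a : K)) := by
      rw [hE]
      simp only [map_neg, map_add, map_mul, map_pow, map_intCast]
    rw [hEc]
    linear_combination -hA8
  have hinv : ((α : K) ^ 2)⁻¹ = (E : K) := inv_eq_of_mul_eq_one_right hEK
  have hδE : δ = ((α ^ 2 + E : 𝓞 K) : K) := by
    rw [hδ, hinv]
    push_cast
    ring
  have hδM : δ ∈ M := by
    rw [hM]
    exact IntermediateField.mem_adjoin_simple_self ℚ δ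
  have hδint : IsIntegral ℤ δ := by
    rw [hδE]
    exact (α ^ 2 + E).2
  set d : 𝓞 M := ⟨⟨δ, hδM⟩, by
    exact (isIntegral_algebraMap_iff (algebraMap (↥M) K).injective).mp
      (show IsIntegral ℤ (algebraMap (↥M) K ⟨δ, hδM⟩) from hδint)⟩ with hd
  have hdK : algebraMap (𝓞 K) K (algebraMap (𝓞 M) (𝓞 K) d) = δ := rfl
  have hδE' : δ = algebraMap (𝓞 K) K (α ^ 2 + E) := hδE
  -- the key quadratic relation α⁴ = d α² - 1
  have hkey : (algebraMap (𝓞 M) (𝓞 K)) d * α ^ 2 - 1 = α ^ 4 := by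
    apply NumberField.RingOfIntegers.ext
    show algebraMap (𝓞 K) K _ = algebraMap (𝓞 K) K _
    rw [map_sub, map_mul, map_one, map_pow, map_pow, hdK, hδE', map_add, map_pow]
    linear_combination hEK
  -- the candidate basis vectors
  set v : Fin 4 → 𝓞 K := fun i => α ^ (i : ℕ) with hv
  have hv0 : v 0 = α ^ 0 := rfl
  have hv1 : v 1 = α ^ 1 := rfl
  have hv2 : v 2 = α ^ 2 := rfl
  have hv3 : v 3 = α ^ 3 := rfl
  -- spanning
  have hkey' : ∀ n : ℕ, α ^ (n + 4) = d • α ^ (n + 2) - α ^ n := by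
    intro n
    rw [Algebra.smul_def]
    calc α ^ (n + 4) = α ^ n * α ^ 4 := by ring
    _ = α ^ n * ((algebraMap (𝓞 M) (𝓞 K)) d * α ^ 2 - 1) := by rw [hkey]
    _ = _ := by ring
  have hpow : ∀ n : ℕ, α ^ n ∈ Submodule.span (𝓞 M) (Set.range v) := by
    intro n
    induction n using Nat.strong_induction_on with
    | _ n ih =>
      match n, ih with
      | 0, _ => exact Submodule.subset_span ⟨0, hv0.symm ▸ rfl⟩
      | 1, _ => exact Submodule.subset_span ⟨1, rfl⟩
      | 2, _ => exact Submodule.subset_span ⟨2, rfl⟩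
      | 3, _ => exact Submodule.subset_span ⟨3, rfl⟩
      | (m + 4), ih =>
        rw [hkey' m]
        exact sub_mem (Submodule.smul_mem _ _ (ih (m + 2) (by omega))) (ih m (by omega))
  have hspan : ⊤ ≤ Submodule.span (𝓞 M) (Set.range v) := by
    intro γ _
    have hγ : γ ∈ Algebra.adjoin ℤ {α} := hmono.symm ▸ Algebra.mem_top
    rw [Algebra.adjoin_singleton_eq_range_aeval, AlgHom.mem_range] at hγ
    obtain ⟨p, hp⟩ := hγ
    have haev : Polynomial.aeval α p
        = ∑ i ∈ Finset.range (p.natDegree + 1), p.coeff i • α ^ i :=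
      Polynomial.aeval_eq_sum_range α
    rw [← hp, haev]
    apply Submodule.sum_mem
    intro i _
    have hsm : p.coeff i • α ^ i = ((p.coeff i : 𝓞 M)) • α ^ i := by
      rw [zsmul_eq_mul, Algebra.smul_def, map_intCast]
    rw [hsm]
    exact Submodule.smul_mem _ _ (hpow i)
  -- degree computations
  have hintQ : IsIntegral ℚ (α : K) := IsIntegral.of_finite ℚ _
  have hevalQ : Polynomial.aeval (α : K)
      (X ^ 8 + C (a : ℚ) * X ^ 6 + C (b : ℚ) * X ^ 4 + C (a : ℚ) * X ^ 2 + 1 : ℚ[X]) = 0 := by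
    simp only [map_add, map_mul, map_pow, map_one, aeval_X, aeval_C, map_intCast]
    exact hA8
  have hmon : (X ^ 8 + C (a : ℚ) * X ^ 6 + C (b : ℚ) * X ^ 4 + C (a : ℚ) * X ^ 2 + 1 : ℚ[X]).Monic := by
    monicity!
  have hmin : minpoly ℚ (α : K)
      = (X ^ 8 + C (a : ℚ) * X ^ 6 + C (b : ℚ) * X ^ 4 + C (a : ℚ) * X ^ 2 + 1 : ℚ[X]) :=
    (minpoly.eq_of_irreducible_of_monic hirr hevalQ hmon).symm
  have hdeg8 : (X ^ 8 + C (a : ℚ) * X ^ 6 + C (b : ℚ) * X ^ 4 + C (a : ℚ) * X ^ 2 + 1 : ℚ[X]).natDegree = 8 := by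
    compute_degree!
  have hfinK : Module.finrank ℚ K = 8 := by
    have h1 := IntermediateField.adjoin.finrank hintQ
    rw [hmin, hdeg8, hK, IntermediateField.finrank_top'] at h1
    omega
  -- M is at most quadratic
  have hq : δ ^ 2 + (a : K) * δ + ((b : K) - 2) = 0 := by
    have h2 : (α : K) ^ 2 ≠ 0 := pow_ne_zero _ hA0
    rw [hδ]
    field_simp
    linear_combination hA8
  have hMfin : Module.finrank ℚ ↥M ≤ 2 := by
    have h1 := IntermediateField.adjoin.finrank (IsIntegral.of_finite ℚ δ)
    rw [← hM] at h1
    rw [h1]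
    have hev : Polynomial.aeval δ (X ^ 2 + C (a : ℚ) * X + C ((b : ℚ) - 2) : ℚ[X]) = 0 := by
      simp only [map_add, map_mul, map_pow, aeval_X, aeval_C, map_intCast, map_sub, map_ofNat]
      linear_combination hq
    have hmon2 : (X ^ 2 + C (a : ℚ) * X + C ((b : ℚ) - 2) : ℚ[X]).Monic := by
      monicity!
    have hne : (X ^ 2 + C (a : ℚ) * X + C ((b : ℚ) - 2) : ℚ[X]) ≠ 0 := hmon2.ne_zero
    have hdvd := minpoly.dvd ℚ δ hev
    calc (minpoly ℚ δ).natDegree ≤ (X ^ 2 + C (a : ℚ) * X + C ((b : ℚ) - 2) : ℚ[X]).natDegree :=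
          Polynomial.natDegree_le_of_dvd hdvd hne
      _ ≤ 2 := by compute_degree
  -- K = M(α) and degree of α over M is at least 4
  haveI : FiniteDimensional ↥M K := FiniteDimensional.right ℚ ↥M K
  have hintM : IsIntegral ↥M (α : K) := IsIntegral.of_finite _ _
  have htopM : IntermediateField.adjoin ↥M {(α : K)} = ⊤ := by
    apply IntermediateField.restrictScalars_injective ℚ
    erw [IntermediateField.restrictScalars_adjoin_eq_sup (K := M), IntermediateField.restrictScalars_top,
      hK, sup_top_eq]
  have hge4 : 4 ≤ (minpoly ↥M (α : K)).natDegree := by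
    have h1 := IntermediateField.adjoin.finrank hintM
    rw [htopM, IntermediateField.finrank_top'] at h1
    have h3 : Module.finrank ℚ ↥M * Module.finrank ↥M K = 8 := by
      rw [Module.finrank_mul_finrank]
      exact hfinK
    rw [← h1]
    have h4 : 8 ≤ 2 * Module.finrank ↥M K := by
      calc 8 = Module.finrank ℚ ↥M * Module.finrank ↥M K := h3.symm
        _ ≤ 2 * Module.finrank ↥M K := Nat.mul_le_mul_right _ hMfin
    omega
  have hLIM : LinearIndependent ↥M (fun i : Fin 4 => (α : K) ^ (i : ℕ)) := by
    have h := linearIndependent_pow (K := ↥M) (α : K)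
    have h2 := h.comp (Fin.castLE hge4) (Fin.castLE_injective _)
    have h3 : (fun i : Fin 4 => (α : K) ^ (i : ℕ))
        = (fun i : Fin (minpoly (↥M) (α : K)).natDegree => (α : K) ^ (i : ℕ))
          ∘ Fin.castLE hge4 := rfl
    rw [h3]
    exact h2
  -- linear independence over 𝓞 M
  have hLI : LinearIndependent (𝓞 M) v := by
    rw [Fintype.linearIndependent_iff]
    intro g hg
    have key : ∀ i : Fin 4, algebraMap (𝓞 K) K (g i • v i)
        = ((g i : ↥M)) • ((α : K) ^ (i : ℕ)) := by
      intro i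
      simp only [Algebra.smul_def, map_mul, map_pow, hv]
      rfl
    have hg' : ∑ i : Fin 4, ((g i : ↥M)) • ((α : K) ^ (i : ℕ)) = 0 := by
      have h0 := congrArg (algebraMap (𝓞 K) K) hg
      rw [map_sum, map_zero] at h0
      rw [← h0]
      exact (Finset.sum_congr rfl fun i _ => (key i)).symm
    intro i
    have hMi := Fintype.linearIndependent_iff.mp hLIM (fun i => (g i : ↥M)) hg' i
    exact RingOfIntegers.coe_eq_zero_iff.mp hMi
  -- the basis
  let bas : Module.Basis (Fin 4) (𝓞 M) (𝓞 K) := Module.Basis.mk hLI hspan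
  have hbas : ∀ i : Fin 4, bas i = α ^ (i : ℕ) := fun i => Module.Basis.mk_apply hLI hspan i
  -- the sum rewriting lemma
  have hsum : ∀ c0 c1 c2 c3 : 𝓞 M,
      algebraMap (𝓞 M) (𝓞 K) c0 + algebraMap (𝓞 M) (𝓞 K) c1 * α +
        algebraMap (𝓞 M) (𝓞 K) c2 * α ^ 2 + algebraMap (𝓞 M) (𝓞 K) c3 * α ^ 3
      = ∑ i : Fin 4, (![c0, c1, c2, c3] i) • v i := by
    intro c0 c1 c2 c3
    rw [Fin.sum_univ_four]
    simp only [Matrix.cons_val_zero, Matrix.cons_val_one, Matrix.head_cons,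
      Matrix.cons_val_two, Matrix.tail_cons, Matrix.cons_val_three, hv0, hv1, hv2, hv3,
      Algebra.smul_def, pow_zero, mul_one, pow_one]
  refine ⟨⟨bas, hbas⟩, ?_⟩
  intro γ
  have hrep := Module.Basis.sum_repr bas γ
  set r := bas.repr γ with hr
  have hrep' : γ = ∑ i : Fin 4, (![r 0, r 1, r 2, r 3] i) • v i := by
    conv_lhs => rw [← hrep]
    refine Finset.sum_congr rfl fun i _ => ?_
    have hbv : bas i = v i := hbas i
    rw [hbv]
    congr 1
    fin_cases i <;> rfl
  refine ⟨(r 0, r 1, r 2, r 3), ?_, ?_⟩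
  · dsimp only
    rw [hsum]
    exact hrep'
  · rintro ⟨c0, c1, c2, c3⟩ hc
    dsimp only at hc
    rw [hsum] at hc
    have hz : ∑ i : Fin 4, ((![c0, c1, c2, c3] i) - (![r 0, r 1, r 2, r 3] i)) • v i = 0 := by
      simp only [sub_smul, Finset.sum_sub_distrib]
      rw [← hc, ← hrep', sub_self]
    have hco := Fintype.linearIndependent_iff.mp hLI _ hz
    have e0 := sub_eq_zero.mp (hco 0)
    have e1 := sub_eq_zero.mp (hco 1)
    have e2 := sub_eq_zero.mp (hco 2)
    have e3 := sub_eq_zero.mp (hco 3)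
    simp only [Matrix.cons_val_zero, Matrix.cons_val_one, Matrix.head_cons,
      Matrix.cons_val_two, Matrix.tail_cons, Matrix.cons_val_three] at e0 e1 e2 e3
    simp only [Prod.mk.injEq]
    exact ⟨e0, e1, e2, e3⟩
end
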